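/- Let p be an odd prime and a(j) as above (orders of π_j L_{K(1)} S^0 for j ≥ 1). Consider the alternating partial sums A(m,n) = ∑_{j=m+1}^{m+n} (-1)^j a(j). Then for every m ≥ 0, lim_{n→∞} A(m,n)/(n · (-1/2)·log_p n) = 1. -/

import Mathlib

open Filter Real

/-- The order of `π_j L_{K(1)} S⁰` for `j ≥ 1` (at the odd prime `p`):
`p^(k+1)` if `j = 2(p-1)p^k r - 1` with `p ∤ r`, and `1` otherwise. -/
def K1SphereOrder (p j : ℕ) : ℕ :=
  if 2 * (p - 1) ∣ (j + 1) then p ^ (padicValNat p ((j + 1) / (2 * (p - 1))) + 1) else 1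

open Finset in
def Tsum (p M : ℕ) : ℕ := ∑ s ∈ Finset.Ioc 0 M, p ^ (padicValNat p s)

lemma geom_nat (p v : ℕ) : ∑ k ∈ Finset.range v, (p-1) * p ^ k = p ^ v - 1 := by
  induction v with
  | zero => simp
  | succ v ih =>
    rw [Finset.sum_range_succ, ih]
    cases Nat.eq_zero_or_pos p with
    | inl h => subst h; cases v <;> simp
    | inr h =>
      have h1 : 1 ≤ p ^ v := Nat.one_le_pow _ _ h
      have h2 : p ^ v ≤ p ^ (v+1) := Nat.pow_le_pow_right h (by omega)
      have hEq : (p-1) * p ^ v = p^(v+1) - p^v := by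
        rw [Nat.sub_one_mul, ← pow_succ']
      omega

lemma Tsum_eq (p M : ℕ) (hp : p.Prime) :
    Tsum p M = M + ∑ k ∈ Finset.Icc 1 M, (p-1) * p ^ (k-1) * (M / p ^ k) := by
  have hp2 : 2 ≤ p := hp.two_le
  have key : ∀ s ∈ Finset.Ioc 0 M, p ^ (padicValNat p s)
      = 1 + ∑ k ∈ Finset.Icc 1 M, (p-1) * p ^ (k-1) * (if p ^ k ∣ s then 1 else 0) := by
    intro s hs
    simp only [Finset.mem_Ioc] at hs
    set v := padicValNat p s with hv
    have hvM : v ≤ M := by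
      have h1 : p ^ v ∣ s := pow_padicValNat_dvd
      have h2 : p ^ v ≤ s := Nat.le_of_dvd hs.1 h1
      have h3 : v < 2 ^ v := Nat.lt_two_pow_self
      have h4 : 2 ^ v ≤ p ^ v := Nat.pow_le_pow_left hp2 v
      omega
    have hdvd : ∀ k, p ^ k ∣ s ↔ k ≤ v := by
      intro k
      haveI : Fact p.Prime := ⟨hp⟩
      exact padicValNat_dvd_iff_le (by omega)
    have : ∑ k ∈ Finset.Icc 1 M, (p-1) * p ^ (k-1) * (if p ^ k ∣ s then 1 else 0)
        = ∑ k ∈ Finset.Icc 1 v, (p-1) * p ^ (k-1) := by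
      have h1 : (Finset.Icc 1 M).filter (fun k => p ^ k ∣ s) = Finset.Icc 1 v := by
        ext k; simp only [Finset.mem_filter, Finset.mem_Icc, hdvd k]; omega
      rw [← h1, Finset.sum_filter]
      exact Finset.sum_congr rfl (fun k _ => by split <;> simp)
    rw [this]
    have : ∑ k ∈ Finset.Icc 1 v, (p-1) * p ^ (k-1) = ∑ k ∈ Finset.range v, (p-1) * p ^ k := by
      rw [Finset.range_eq_Ico]
      refine Finset.sum_nbij' (fun k => k - 1) (fun k => k + 1) ?_ ?_ ?_ ?_ ?_ <;>
        simp +contextual [Finset.mem_Icc, Finset.mem_Ico] <;> omega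
    rw [this, geom_nat]
    have : 1 ≤ p ^ v := Nat.one_le_pow _ _ (by omega)
    omega
  rw [Tsum, Finset.sum_congr rfl key, Finset.sum_add_distrib]
  simp only [Finset.sum_const, Nat.card_Ioc, Nat.sub_zero, smul_eq_mul, mul_one]
  congr 1
  rw [Finset.sum_comm]
  refine Finset.sum_congr rfl (fun k _ => ?_)
  rw [← Finset.mul_sum]
  congr 1
  rw [← Nat.Ioc_filter_dvd_card_eq_div M (p^k), Finset.card_eq_sum_ones, Finset.sum_filter]

lemma Tsum_bounds (p M : ℕ) (hp : p.Prime) (hM : 1 ≤ M) :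
    ((p:ℝ)-1)/p * (Nat.log p M) * M ≤ (Tsum p M : ℝ) ∧
    (Tsum p M : ℝ) ≤ M + ((p:ℝ)-1)/p * (Nat.log p M) * M := by
  have hp2 : 2 ≤ p := hp.two_le
  have hp1 : (1:ℝ) ≤ (p:ℝ) := by exact_mod_cast hp.one_le
  set K := Nat.log p M with hK
  have hKM : K ≤ M := Nat.log_le_self p M
  have hrestrict : ∑ k ∈ Finset.Icc 1 M, (p-1) * p ^ (k-1) * (M / p ^ k)
      = ∑ k ∈ Finset.Icc 1 K, (p-1) * p ^ (k-1) * (M / p ^ k) := by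
    rw [← Finset.sum_subset (Finset.Icc_subset_Icc_right hKM)]
    intro k hk hk'
    simp only [Finset.mem_Icc] at hk hk'
    have : M < p ^ k := by
      have := Nat.lt_pow_succ_log_self (by omega : 1 < p) M
      calc M < p ^ (K+1) := this
        _ ≤ p ^ k := Nat.pow_le_pow_right (by omega) (by omega)
    rw [Nat.div_eq_of_lt this, mul_zero]
  have hcast : (Tsum p M : ℝ)
      = M + ∑ k ∈ Finset.Icc 1 K, ((p:ℝ)-1) * p ^ (k-1) * ((M / p ^ k : ℕ) : ℝ) := by
    rw [Tsum_eq p M hp, hrestrict]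
    push_cast [Nat.cast_sub (by omega : 1 ≤ p)]
    ring_nf
  have hterm_ub : ∀ k ∈ Finset.Icc 1 K,
      ((p:ℝ)-1) * p ^ (k-1) * ((M / p ^ k : ℕ) : ℝ) ≤ ((p:ℝ)-1)/p * M := by
    intro k hk
    simp only [Finset.mem_Icc] at hk
    have hpk : (0:ℝ) < (p:ℝ) ^ k := by positivity
    have h1 : ((M / p ^ k : ℕ) : ℝ) ≤ (M:ℝ) / (p:ℝ)^k := by
      rw [le_div_iff₀ hpk]
      have : (M / p^k) * p^k ≤ M := Nat.div_mul_le_self M (p^k)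
      exact_mod_cast this
    have hk1 : k - 1 + 1 = k := by omega
    have heq : (p:ℝ)^k = (p:ℝ)^(k-1) * p := by rw [← pow_succ, hk1]
    calc ((p:ℝ)-1) * p ^ (k-1) * ((M / p ^ k : ℕ) : ℝ)
        ≤ ((p:ℝ)-1) * p ^ (k-1) * ((M:ℝ) / (p:ℝ)^k) := by
          apply mul_le_mul_of_nonneg_left h1
          apply mul_nonneg (by linarith) (by positivity)
      _ = ((p:ℝ)-1)/p * M := by rw [heq]; field_simp
  constructor
  · rw [hcast]
    have hlb : ∀ k ∈ Finset.Icc 1 K, ((p:ℝ)-1)/p * M - ((p:ℝ)-1) * p^(k-1)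
        ≤ ((p:ℝ)-1) * p ^ (k-1) * ((M / p ^ k : ℕ) : ℝ) := by
      intro k hk
      simp only [Finset.mem_Icc] at hk
      have hpk : (0:ℝ) < (p:ℝ) ^ k := by positivity
      have hpkn : 0 < p ^ k := by positivity
      have h1 : (M:ℝ) / (p:ℝ)^k - 1 ≤ ((M / p ^ k : ℕ) : ℝ) := by
        have h0 := Nat.div_add_mod M (p^k)
        have h0' := Nat.mod_lt M hpkn
        have hmul : (M/p^k + 1) * p^k = p^k * (M/p^k) + p^k := by ring
        have hc : M < (M/p^k + 1) * p^k := by omega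
        have hc' : (M:ℝ) < (((M/p^k : ℕ):ℝ) + 1) * (p:ℝ)^k := by exact_mod_cast hc
        have := (div_lt_iff₀ hpk).mpr hc'
        linarith
      have hk1 : k - 1 + 1 = k := by omega
      have heq : (p:ℝ)^k = (p:ℝ)^(k-1) * p := by rw [← pow_succ, hk1]
      have hpow : ((p:ℝ)-1) * p^(k-1) * ((M:ℝ)/(p:ℝ)^k - 1)
          = ((p:ℝ)-1)/p * M - ((p:ℝ)-1)*p^(k-1) := by
        rw [heq]; field_simp
      calc ((p:ℝ)-1)/p * M - ((p:ℝ)-1) * p^(k-1)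
          = ((p:ℝ)-1) * p^(k-1) * ((M:ℝ)/(p:ℝ)^k - 1) := hpow.symm
        _ ≤ _ := mul_le_mul_of_nonneg_left h1
            (mul_nonneg (by linarith) (by positivity))
    have hsum := Finset.sum_le_sum hlb
    have hgeom : ∑ k ∈ Finset.Icc 1 K, ((p:ℝ)-1) * (p:ℝ)^(k-1) ≤ M := by
      have hre : ∑ k ∈ Finset.Icc 1 K, ((p:ℝ)-1) * (p:ℝ)^(k-1)
          = ∑ k ∈ Finset.range K, ((p:ℝ)-1) * (p:ℝ)^k := by
        refine Finset.sum_nbij' (fun k => k - 1) (fun k => k + 1) ?_ ?_ ?_ ?_ ?_ <;>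
          simp +contextual [Finset.mem_Icc, Finset.mem_Ico] <;> intros <;>
            first
              | omega
              | (congr 1; omega)
      have hnat : ((p^K - 1 : ℕ) : ℝ) = ∑ k ∈ Finset.range K, ((p:ℝ)-1) * (p:ℝ)^k := by
        rw [← geom_nat p K]
        push_cast [Nat.cast_sub (by omega : 1 ≤ p)]
        ring_nf
      have hple : p ^ K ≤ M := Nat.pow_log_le_self p (by omega)
      rw [hre, ← hnat]
      have : ((p^K - 1 : ℕ) : ℝ) ≤ ((p^K : ℕ) : ℝ) := by
        exact_mod_cast Nat.sub_le _ _
      have : ((p^K : ℕ) : ℝ) ≤ (M:ℝ) := by exact_mod_cast hple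
      have h3 : ((p^K - 1 : ℕ) : ℝ) ≤ ((p^K : ℕ) : ℝ) := by exact_mod_cast Nat.sub_le _ _
      linarith
    rw [Finset.sum_sub_distrib, Finset.sum_const, Nat.card_Icc, Nat.add_sub_cancel,
      nsmul_eq_mul] at hsum
    have heq1 : (K:ℝ) * (((p:ℝ)-1)/p * (M:ℝ)) = ((p:ℝ)-1)/p * K * M := by ring
    linarith
  · rw [hcast]
    have h2 := Finset.sum_le_sum hterm_ub
    rw [Finset.sum_const, Nat.card_Icc, Nat.add_sub_cancel, nsmul_eq_mul] at h2
    have heq1 : (K:ℝ) * (((p:ℝ)-1)/p * (M:ℝ)) = ((p:ℝ)-1)/p * K * M := by ring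
    linarith

lemma natlog_logb (p M : ℕ) (hp : 1 < p) (hM : 1 ≤ M) :
    (Real.logb p M) - 1 < (Nat.log p M : ℝ) ∧ (Nat.log p M : ℝ) ≤ Real.logb p M := by
  have hp1 : (1:ℝ) < (p:ℝ) := by exact_mod_cast hp
  have hM0 : (0:ℝ) < (M:ℝ) := by exact_mod_cast hM
  constructor
  · have h2 : (M:ℝ) < (p:ℝ) ^ (Nat.log p M + 1) := by
      exact_mod_cast Nat.lt_pow_succ_log_self hp M
    have h3 : Real.logb p M < Real.logb p ((p:ℝ) ^ (Nat.log p M + 1)) :=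
      Real.logb_lt_logb hp1 hM0 h2
    rw [Real.logb_pow, Real.logb_self_eq_one hp1] at h3
    push_cast at h3 ⊢
    linarith
  · have h2 : ((p:ℝ)) ^ (Nat.log p M) ≤ (M:ℝ) := by
      exact_mod_cast Nat.pow_log_le_self p (by omega)
    have h3 := Real.logb_le_logb_of_le hp1 (by positivity : (0:ℝ) < (p:ℝ)^(Nat.log p M)) h2
    rwa [Real.logb_pow, Real.logb_self_eq_one hp1, mul_one] at h3

lemma tendsto_Tsum_div (p : ℕ) (hp : p.Prime) :
    Tendsto (fun M : ℕ => (Tsum p M : ℝ) / (M * Real.logb p M)) atTop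
      (nhds (((p:ℝ)-1)/p)) := by
  have hp1 : (1:ℝ) < (p:ℝ) := by exact_mod_cast hp.one_lt
  have hlogb : Tendsto (fun M : ℕ => Real.logb p M) atTop atTop :=
    (Real.tendsto_logb_atTop hp1).comp tendsto_natCast_atTop_atTop
  have hL0 : ∀ᶠ M : ℕ in atTop, 0 < Real.logb p M := hlogb.eventually_gt_atTop 0
  have hinv : Tendsto (fun M : ℕ => (Real.logb p M)⁻¹) atTop (nhds 0) :=
    hlogb.inv_tendsto_atTop
  have hKL : Tendsto (fun M : ℕ => (Nat.log p M : ℝ) / Real.logb p M) atTop (nhds 1) := by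
    refine tendsto_of_tendsto_of_tendsto_of_le_of_le'
      (g := fun M : ℕ => 1 - (Real.logb p M)⁻¹) (h := fun _ => (1:ℝ))
      (by simpa using tendsto_const_nhds.sub hinv) tendsto_const_nhds ?_ ?_
    · filter_upwards [hL0, eventually_ge_atTop 1] with M hM hM1
      have h := (natlog_logb p M hp.one_lt hM1).1
      rw [sub_le_iff_le_add, div_eq_mul_inv, ← sub_le_iff_le_add']
      have : 1 - (Nat.log p M : ℝ) * (Real.logb p M)⁻¹
          = (Real.logb p M - (Nat.log p M : ℝ)) * (Real.logb p M)⁻¹ := by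
        field_simp
      rw [this]
      calc (Real.logb p M - (Nat.log p M : ℝ)) * (Real.logb p M)⁻¹
          ≤ 1 * (Real.logb p M)⁻¹ := by
            apply mul_le_mul_of_nonneg_right (by linarith) (by positivity)
        _ = (Real.logb p M)⁻¹ := one_mul _
    · filter_upwards [hL0, eventually_ge_atTop 1] with M hM hM1
      exact div_le_one_of_le₀ (natlog_logb p M hp.one_lt hM1).2 hM.le
  have hconst : Tendsto (fun M : ℕ => ((p:ℝ)-1)/p * ((Nat.log p M : ℝ) / Real.logb p M))
      atTop (nhds (((p:ℝ)-1)/p)) := by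
    simpa using tendsto_const_nhds.mul hKL
  refine tendsto_of_tendsto_of_tendsto_of_le_of_le'
    (g := fun M : ℕ => ((p:ℝ)-1)/p * ((Nat.log p M : ℝ) / Real.logb p M))
    (h := fun M : ℕ => (Real.logb p M)⁻¹ + ((p:ℝ)-1)/p * ((Nat.log p M : ℝ) / Real.logb p M))
    hconst (by simpa using hinv.add hconst) ?_ ?_
  · filter_upwards [hL0, eventually_ge_atTop 1] with M hL hM1
    have hM0 : (0:ℝ) < (M:ℝ) := by exact_mod_cast hM1
    have hb := (Tsum_bounds p M hp hM1).1
    have heq : ((p:ℝ)-1)/p * ((Nat.log p M : ℝ) / Real.logb p M)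
        = (((p:ℝ)-1)/p * (Nat.log p M) * M) / (M * Real.logb p M) := by
      field_simp
    rw [heq]
    exact div_le_div_of_nonneg_right hb (by positivity) |>.trans_eq rfl
  · filter_upwards [hL0, eventually_ge_atTop 1] with M hL hM1
    have hM0 : (0:ℝ) < (M:ℝ) := by exact_mod_cast hM1
    have hb := (Tsum_bounds p M hp hM1).2
    have heq : (Real.logb p M)⁻¹ + ((p:ℝ)-1)/p * ((Nat.log p M : ℝ) / Real.logb p M)
        = ((M:ℝ) + ((p:ℝ)-1)/p * (Nat.log p M) * M) / (M * Real.logb p M) := by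
      field_simp
    rw [heq]
    exact div_le_div_of_nonneg_right hb (by positivity) |>.trans_eq rfl

lemma reindex (q m n : ℕ) (hq : 1 ≤ q) (F : ℕ → ℝ) :
    ∑ j ∈ (Finset.Ioc m (m+n)).filter (fun j => q ∣ j+1), F ((j+1)/q)
      = ∑ s ∈ Finset.Ioc ((m+1)/q) ((m+n+1)/q), F s := by
  refine Finset.sum_nbij' (fun j => (j+1)/q) (fun s => q*s - 1) ?_ ?_ ?_ ?_ ?_
  · intro j hj
    simp only [Finset.mem_filter, Finset.mem_Ioc] at hj ⊢
    obtain ⟨⟨h1, h2⟩, hd⟩ := hj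
    constructor
    · rw [Nat.div_lt_iff_lt_mul hq, Nat.div_mul_cancel hd]; omega
    · exact Nat.div_le_div_right (by omega)
  · intro s hs
    simp only [Finset.mem_filter, Finset.mem_Ioc] at hs ⊢
    obtain ⟨h1, h2⟩ := hs
    have hs1 : 1 ≤ s := Nat.lt_of_le_of_lt (Nat.zero_le _) h1
    have hcomm : q * s = s * q := Nat.mul_comm q s
    have hqs1 : m + 1 < s * q := (Nat.div_lt_iff_lt_mul hq).mp h1
    have hqs2 : q * s ≤ m + n + 1 := by
      calc q * s ≤ q * ((m+n+1)/q) := Nat.mul_le_mul_left q h2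
        _ ≤ m + n + 1 := Nat.mul_div_le _ _
    have hpos : 1 ≤ q * s := Nat.mul_pos (by omega) hs1
    refine ⟨⟨by omega, by omega⟩, ?_⟩
    have heq : q * s - 1 + 1 = q * s := by omega
    rw [heq]
    exact Dvd.intro s rfl
  · intro j hj
    simp only [Finset.mem_filter, Finset.mem_Ioc] at hj
    show q * ((j+1)/q) - 1 = j
    rw [Nat.mul_div_cancel' hj.2]
    omega
  · intro s hs
    simp only [Finset.mem_Ioc] at hs
    have hs1 : 1 ≤ s := Nat.lt_of_le_of_lt (Nat.zero_le _) hs.1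
    have hpos : 1 ≤ q * s := Nat.mul_pos (by omega) hs1
    show (q * s - 1 + 1) / q = s
    have heq : q * s - 1 + 1 = q * s := by omega
    rw [heq, Nat.mul_div_cancel_left s (by omega)]
  · intro j _; rfl

lemma sum_identity (p : ℕ) (hp : p.Prime) (hodd : Odd p) (m n : ℕ) :
    ∑ j ∈ Finset.Ioc m (m+n), (-1:ℝ)^j * (K1SphereOrder p j : ℝ)
      = (∑ j ∈ Finset.Ioc m (m+n), (-1:ℝ)^j)
        + (((m+n+1)/(2*(p-1)) : ℕ) : ℝ) - (((m+1)/(2*(p-1)) : ℕ) : ℝ)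
        - p * ((Tsum p ((m+n+1)/(2*(p-1))) : ℝ) - (Tsum p ((m+1)/(2*(p-1))) : ℝ)) := by
  set q := 2*(p-1) with hq
  have hp3 : 3 ≤ p := by
    rcases hodd with ⟨k, hk⟩
    have := hp.two_le
    omega
  have hq4 : 4 ≤ q := by omega
  -- pointwise
  have hpt : ∀ j, (-1:ℝ)^j * (K1SphereOrder p j : ℝ)
      = (-1:ℝ)^j + (if q ∣ j+1 then 1 - p * (p:ℝ)^(padicValNat p ((j+1)/q)) else 0) := by
    intro j
    by_cases hd : q ∣ j+1
    · have h2d : 2 ∣ j + 1 := dvd_trans ⟨p-1, rfl⟩ hd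
      have hjodd : Odd j := by rw [Nat.odd_iff]; omega
      rw [if_pos hd, K1SphereOrder, if_pos hd, hjodd.neg_one_pow]
      push_cast [pow_succ]
      ring
    · rw [if_neg hd, K1SphereOrder, if_neg hd]
      simp
  rw [Finset.sum_congr rfl (fun j _ => hpt j), Finset.sum_add_distrib]
  rw [← Finset.sum_filter]
  rw [reindex q m n (by omega) (fun s => 1 - p * (p:ℝ)^(padicValNat p s))]
  rw [Finset.sum_sub_distrib, Finset.sum_const, nsmul_eq_mul, mul_one]
  have hle : (m+1)/q ≤ (m+n+1)/q := Nat.div_le_div_right (by omega)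
  have hcard : ((Finset.Ioc ((m+1)/q) ((m+n+1)/q)).card : ℝ)
      = (((m+n+1)/q : ℕ) : ℝ) - (((m+1)/q : ℕ) : ℝ) := by
    rw [Nat.card_Ioc]
    exact Nat.cast_sub hle
  have hT : ∑ s ∈ Finset.Ioc ((m+1)/q) ((m+n+1)/q), (p:ℝ) * (p:ℝ)^(padicValNat p s)
      = p * ((Tsum p ((m+n+1)/q) : ℝ) - (Tsum p ((m+1)/q) : ℝ)) := by
    rw [← Finset.mul_sum]
    congr 1
    have hsplit := Finset.sum_Ioc_consecutive (fun s => (p:ℝ)^(padicValNat p s))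
      (Nat.zero_le ((m+1)/q)) hle
    have hTT : ∀ M, (Tsum p M : ℝ) = ∑ s ∈ Finset.Ioc 0 M, (p:ℝ)^(padicValNat p s) := by
      intro M; rw [Tsum]; push_cast; ring
    rw [hTT, hTT, ← hsplit]
    ring
  rw [hcard, hT]
  ring

/-- For every `m`, the alternating partial sums `A(m,n) = ∑_{j=m+1}^{m+n} (-1)^j a(j)`
of the orders of the `K(1)`-local stable stems of the sphere satisfy
`A(m,n)/(n·(-1/2)·log_p n) → 1`: the graded average of the orders of `n`
consecutive `K(1)`-local homotopy groups grows like `-(1/2)·log_p(n)`. -/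
theorem statement16 (p : ℕ) (hp : p.Prime) (hodd : Odd p) :
    ∀ m : ℕ, Tendsto (fun n : ℕ =>
      (∑ j ∈ Finset.Ioc m (m + n), (-1 : ℝ) ^ j * (K1SphereOrder p j : ℝ)) /
        (n * (-(1 / 2)) * Real.logb p n)) atTop (nhds 1) := by

  intro m
  have hp3 : 3 ≤ p := by
    rcases hodd with ⟨k, hk⟩; have := hp.two_le; omega
  have h1p : 1 ≤ p := by omega
  set q : ℕ := 2*(p-1) with hqdef
  have hq4 : 4 ≤ q := by omega
  have hqR : (q:ℝ) = 2*((p:ℝ)-1) := by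
    rw [hqdef]; push_cast [Nat.cast_sub h1p]; ring
  have hq0 : (0:ℝ) < (q:ℝ) := by
    have : (0:ℕ) < q := by omega
    exact_mod_cast this
  have hpR : (3:ℝ) ≤ (p:ℝ) := by exact_mod_cast hp3
  have hp1 : (1:ℝ) < (p:ℝ) := by linarith
  set M₂ : ℕ → ℕ := fun n => (m+n+1)/q with hM₂def
  set c₁ : ℕ := (m+1)/q with hc₁def
  set B : ℕ → ℝ := fun n => (n:ℝ)*(1/2)*Real.logb p n with hBdef
  set E : ℕ → ℝ := fun n => ∑ j ∈ Finset.Ioc m (m+n), (-1:ℝ)^j with hEdef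
  have hlogb : Tendsto (fun n : ℕ => Real.logb p n) atTop atTop :=
    (Real.tendsto_logb_atTop hp1).comp tendsto_natCast_atTop_atTop
  have hB : Tendsto B atTop atTop := by
    rw [hBdef]
    exact Filter.Tendsto.atTop_mul_atTop₀ (tendsto_natCast_atTop_atTop.atTop_mul_const
      (by norm_num : (0:ℝ) < 1/2)) hlogb
  have hBpos : ∀ᶠ n : ℕ in atTop, 0 < B n := hB.eventually_gt_atTop 0
  have hM₂ : Tendsto M₂ atTop atTop := by
    rw [tendsto_atTop_atTop]
    intro b
    refine ⟨q*b, fun n hn => ?_⟩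
    calc b = (q*b)/q := (Nat.mul_div_cancel_left b (by omega)).symm
      _ ≤ (m+n+1)/q := Nat.div_le_div_right (by omega)
  have hM₂n : Tendsto (fun n : ℕ => ((M₂ n : ℕ) : ℝ)/(n:ℝ)) atTop (nhds (1/(q:ℝ))) := by
    have hup : Tendsto (fun n : ℕ => (((n:ℝ)+m+1)/(q:ℝ))/(n:ℝ)) atTop (nhds (1/(q:ℝ))) := by
      have h1 : Tendsto (fun n : ℕ => (1/(q:ℝ)) * (1 + ((m:ℝ)+1)/(n:ℝ))) atTop
          (nhds ((1/(q:ℝ)) * (1 + 0))) :=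
        tendsto_const_nhds.mul (tendsto_const_nhds.add
          (tendsto_const_div_atTop_nhds_zero_nat ((m:ℝ)+1)))
      rw [add_zero, mul_one] at h1
      apply h1.congr'
      filter_upwards [eventually_ge_atTop 1] with n hn
      have hn0 : (0:ℝ) < (n:ℝ) := by exact_mod_cast hn
      field_simp
      ring
    have hlow : Tendsto (fun n : ℕ => (((n:ℝ)+m+1)/(q:ℝ) - 1)/(n:ℝ)) atTop
        (nhds (1/(q:ℝ))) := by
      have h1 : Tendsto (fun n : ℕ => (((n:ℝ)+m+1)/(q:ℝ))/(n:ℝ) - 1/(n:ℝ)) atTop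
          (nhds (1/(q:ℝ) - 0)) :=
        hup.sub (tendsto_const_div_atTop_nhds_zero_nat 1)
      rw [sub_zero] at h1
      apply h1.congr'
      filter_upwards [eventually_ge_atTop 1] with n hn
      rw [div_sub_div_same]
    refine tendsto_of_tendsto_of_tendsto_of_le_of_le' hlow hup ?_ ?_
    · filter_upwards [eventually_ge_atTop 1] with n hn
      have hn0 : (0:ℝ) < (n:ℝ) := by exact_mod_cast hn
      gcongr
      rw [sub_le_iff_le_add, div_le_iff₀ hq0]
      have h0 := Nat.div_add_mod (m+n+1) q
      have h0' := Nat.mod_lt (m+n+1) (show 0 < q by omega)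
      have hM : M₂ n = (m+n+1)/q := rfl
      have hx : q * ((m+n+1)/q + 1) = q*((m+n+1)/q) + q := by ring
      have hnat : m+n+1 < q * (M₂ n + 1) := by rw [hM]; omega
      have hcast : ((m:ℝ)+n+1) < (q:ℝ) * ((M₂ n : ℝ) + 1) := by exact_mod_cast hnat
      nlinarith
    · filter_upwards [eventually_ge_atTop 1] with n hn
      have hn0 : (0:ℝ) < (n:ℝ) := by exact_mod_cast hn
      gcongr
      rw [le_div_iff₀ hq0]
      have hnat : q * M₂ n ≤ m+n+1 := Nat.mul_div_le _ _
      have hcast : (q:ℝ) * (M₂ n : ℝ) ≤ (m:ℝ)+n+1 := by exact_mod_cast hnat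
      nlinarith
  have hu : Tendsto (fun n : ℕ => (p:ℝ) * (Tsum p (M₂ n) : ℝ) / B n) atTop (nhds 1) := by
    have hX : Tendsto (fun n : ℕ => (Tsum p (M₂ n) : ℝ) /
        ((M₂ n : ℝ) * Real.logb p (M₂ n))) atTop (nhds (((p:ℝ)-1)/p)) :=
      (tendsto_Tsum_div p hp).comp hM₂
    have hY : Tendsto (fun n : ℕ => Real.logb p (M₂ n) / Real.logb p n) atTop (nhds 1) := by
      have hw : Tendsto (fun n : ℕ => Real.logb p ((M₂ n : ℝ)/(n:ℝ))) atTop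
          (nhds (Real.logb p (1/(q:ℝ)))) := by
        have hcont : ContinuousAt (fun x : ℝ => Real.logb p x) (1/(q:ℝ)) :=
          Real.continuousAt_logb (by positivity : (0:ℝ) < 1/(q:ℝ)).ne'
        exact hcont.tendsto.comp hM₂n
      have h2 : Tendsto (fun n : ℕ => 1 + Real.logb p ((M₂ n : ℝ)/(n:ℝ)) *
          (Real.logb p n)⁻¹) atTop (nhds (1 + Real.logb p (1/(q:ℝ)) * 0)) :=
        tendsto_const_nhds.add (hw.mul hlogb.inv_tendsto_atTop)
      rw [mul_zero, add_zero] at h2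
      apply h2.congr'
      filter_upwards [hM₂.eventually_ge_atTop 1, eventually_ge_atTop 1,
        hlogb.eventually_gt_atTop 0] with n hMn hn hLn
      have hn0 : (0:ℝ) < (n:ℝ) := by exact_mod_cast hn
      have hM0 : (0:ℝ) < (M₂ n : ℝ) := by exact_mod_cast hMn
      have hsplit : Real.logb p (M₂ n) = Real.logb p n + Real.logb p ((M₂ n : ℝ)/(n:ℝ)) := by
        rw [← Real.logb_mul (by positivity) (by positivity)]
        congr 1
        field_simp
      rw [hsplit]
      field_simp
    have hZ : Tendsto (fun n : ℕ => (p:ℝ) * (M₂ n : ℝ) / ((n:ℝ)*(1/2))) atTop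
        (nhds ((p:ℝ)/((p:ℝ)-1))) := by
      have h1 : Tendsto (fun n : ℕ => (2*(p:ℝ)) * ((M₂ n : ℝ)/(n:ℝ))) atTop
          (nhds ((2*(p:ℝ)) * (1/(q:ℝ)))) := tendsto_const_nhds.mul hM₂n
      have heq : (2*(p:ℝ)) * (1/(q:ℝ)) = (p:ℝ)/((p:ℝ)-1) := by
        have hne : ((p:ℝ)-1) ≠ 0 := by linarith
        rw [hqR]
        field_simp
      rw [heq] at h1
      apply h1.congr'
      filter_upwards [eventually_ge_atTop 1] with n hn
      have hn0 : (0:ℝ) < (n:ℝ) := by exact_mod_cast hn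
      field_simp
    have hprod := (hX.mul hY).mul hZ
    have heq1 : (((p:ℝ)-1)/p * 1) * ((p:ℝ)/((p:ℝ)-1)) = 1 := by
      field_simp
      exact div_self (by linarith)
    rw [heq1] at hprod
    apply hprod.congr'
    filter_upwards [hM₂.eventually_ge_atTop 2, eventually_ge_atTop 2,
      hlogb.eventually_gt_atTop 0] with n hMn hn hLn
    have hM0 : (0:ℝ) < (M₂ n : ℝ) := by exact_mod_cast (by omega : 0 < M₂ n)
    have hM1 : (1:ℝ) < (M₂ n : ℝ) := by exact_mod_cast (by omega : 1 < M₂ n)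
    have hLM : 0 < Real.logb p (M₂ n) := Real.logb_pos hp1 hM1
    have hn0 : (0:ℝ) < (n:ℝ) := by exact_mod_cast (by omega : 0 < n)
    show _ = (p:ℝ) * (Tsum p (M₂ n) : ℝ) / B n
    rw [hBdef]
    field_simp
  have hE1 : ∀ n : ℕ, |E n| ≤ 1 := by
    intro n
    have hIoc : Finset.Ioc m (m+n) = Finset.Ico (m+1) (m+n+1) := by
      ext j; simp only [Finset.mem_Ioc, Finset.mem_Ico]; omega
    have hEeq : E n = (∑ j ∈ Finset.range (m+n+1), (-1:ℝ)^j)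
        - ∑ j ∈ Finset.range (m+1), (-1:ℝ)^j := by
      rw [hEdef]
      simp only [hIoc]
      exact Finset.sum_Ico_eq_sub _ (by omega)
    rw [hEeq, neg_one_geom_sum, neg_one_geom_sum]
    split <;> split <;> norm_num
  have hEB : Tendsto (fun n : ℕ => (-(E n))/B n) atTop (nhds 0) := by
    refine squeeze_zero_norm' (a := fun n => (B n)⁻¹) ?_ hB.inv_tendsto_atTop
    filter_upwards [hBpos] with n hb
    rw [norm_div, norm_neg, Real.norm_eq_abs, Real.norm_eq_abs, abs_of_pos hb]
    calc |E n| / B n ≤ 1 / B n := by gcongr; exact hE1 n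
      _ = (B n)⁻¹ := one_div _
  have hnB : Tendsto (fun n : ℕ => (n:ℝ)/B n) atTop (nhds 0) := by
    have h := (hlogb.const_mul_atTop (by norm_num : (0:ℝ) < 1/2)).inv_tendsto_atTop
    apply h.congr'
    filter_upwards [eventually_ge_atTop 1, hlogb.eventually_gt_atTop 0] with n hn hL
    have hn0 : (0:ℝ) < (n:ℝ) := by exact_mod_cast hn
    simp only [Pi.inv_apply]
    rw [hBdef]
    field_simp
  have hMB : Tendsto (fun n : ℕ => (-(M₂ n : ℝ))/B n) atTop (nhds 0) := by
    have hprod : Tendsto (fun n : ℕ => -(((M₂ n : ℝ)/(n:ℝ)) * ((n:ℝ)/B n))) atTop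
        (nhds (-(1/(q:ℝ) * 0))) := (hM₂n.mul hnB).neg
    rw [mul_zero, neg_zero] at hprod
    apply hprod.congr'
    filter_upwards [eventually_ge_atTop 1, hBpos] with n hn hb
    have hn0 : (0:ℝ) < (n:ℝ) := by exact_mod_cast hn
    field_simp
  have hconstB' : Tendsto (fun n : ℕ => ((c₁:ℝ) - (p:ℝ)*(Tsum p c₁:ℝ))/B n) atTop (nhds 0) :=
    Filter.Tendsto.div_atTop tendsto_const_nhds hB
  have hsum := ((hu.add hEB).add hMB).add hconstB'
  norm_num at hsum
  apply hsum.congr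
  intro n
  rw [sum_identity p hp hodd m n]
  have hD : ((n:ℝ) * (-(1/2)) * Real.logb p n) = -B n := by rw [hBdef]; ring
  rw [hD, div_neg]
  have hM : M₂ n = (m+n+1)/(2*(p-1)) := rfl
  have hc : c₁ = (m+1)/(2*(p-1)) := rfl
  rw [← hM, ← hc]
  have hE : (∑ j ∈ Finset.Ioc m (m+n), (-1:ℝ)^j) = E n := rfl
  rw [hE]
  ring
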